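/- Let p be a prime, χ a nonprincipal multiplicative character of F_p, G a multiplicative subgroup of F_p^* of order T, and a ∈ F_p^*. Then |T_χ(a, G)|² ≤ p · E(G) / T, where T_χ(a, G) = Σ_{λ, μ ∈ G} χ(a + λ + μ) and E(G) is the additive energy of G. -/

import Mathlib

open scoped Classical

section helpers
variable {p : ℕ} [Fact p.Prime]

private lemma aux_conj (χ : MulChar (ZMod p) ℂ) (z : ZMod p) :
    (starRingEnd ℂ) (χ z) = χ z⁻¹ := by
  rw [← MulChar.inv_apply' χ z, ← MulChar.star_apply' χ z, starRingEnd_apply]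

private lemma aux_mul_conj (χ : MulChar (ZMod p) ℂ) (u w : ZMod p) :
    χ u * (starRingEnd ℂ) (χ w) = χ (u * w⁻¹) := by
  rw [aux_conj, map_mul]

private lemma aux_diag (χ : MulChar (ZMod p) ℂ) (A g : ZMod p)
    (hA : A ≠ 0) (hg : g ≠ 0) :
    ∑ x : ZMod p, χ (A + g * x) * (starRingEnd ℂ) (χ (A + g * x)) = (p : ℂ) - 1 := by
  have hinv : g * (g⁻¹ * A) = A := by rw [← mul_assoc, mul_inv_cancel₀ hg, one_mul]
  have key : ∀ x : ZMod p, χ (A + g * x) * (starRingEnd ℂ) (χ (A + g * x))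
      = 1 - (if x = -(g⁻¹ * A) then 1 else 0) := by
    intro x
    rw [aux_mul_conj]
    by_cases h : x = -(g⁻¹ * A)
    · have hz : A + g * x = 0 := by rw [h, mul_neg, hinv]; ring
      rw [if_pos h, hz, zero_mul, MulChar.map_zero]
      ring
    · have hz : A + g * x ≠ 0 := by
        intro hc
        exact h (by
          have : g * x = g * (-(g⁻¹ * A)) := by rw [mul_neg, hinv]; linear_combination hc
          exact mul_left_cancel₀ hg this)
      rw [if_neg h, mul_inv_cancel₀ hz, χ.map_one]
      ring
  rw [Finset.sum_congr rfl (fun x _ => key x), Finset.sum_sub_distrib,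
    Finset.sum_ite_eq' Finset.univ (-(g⁻¹ * A)) (fun _ => (1:ℂ))]
  simp [ZMod.card]

private lemma aux_offdiag (χ : MulChar (ZMod p) ℂ) (hχ : χ ≠ 1)
    (A g h : ZMod p) (hA : A ≠ 0) (hg : g ≠ 0) (hh : h ≠ 0) (hgh : g ≠ h) :
    ∑ x : ZMod p, χ (A + g * x) * (starRingEnd ℂ) (χ (A + h * x)) = - χ (g * h⁻¹) := by
  have hghne : g - h ≠ 0 := sub_ne_zero.mpr hgh
  set x₀ : ZMod p := -(h⁻¹ * A) with hx₀def
  have hzero : ∀ x : ZMod p, A + h * x = 0 ↔ x = x₀ := by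
    intro x
    constructor
    · intro hc
      have : h * x = h * x₀ := by
        rw [hx₀def, mul_neg, ← mul_assoc, mul_inv_cancel₀ hh, one_mul]
        linear_combination hc
      exact mul_left_cancel₀ hh this
    · intro hx
      rw [hx, hx₀def, mul_neg, ← mul_assoc, mul_inv_cancel₀ hh, one_mul]; ring
  have key : ∀ x : ZMod p, χ (A + g * x) * (starRingEnd ℂ) (χ (A + h * x))
      = χ ((A + g * x) * (A + h * x)⁻¹) := fun x => aux_mul_conj χ _ _
  rw [Finset.sum_congr rfl (fun x _ => key x)]
  rw [← Finset.add_sum_erase _ _ (Finset.mem_univ x₀)]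
  have hterm0 : χ ((A + g * x₀) * (A + h * x₀)⁻¹) = 0 := by
    rw [(hzero x₀).mpr rfl, inv_zero, mul_zero, MulChar.map_zero]
  rw [hterm0, zero_add]
  have hbij : ∑ x ∈ Finset.univ.erase x₀, χ ((A + g * x) * (A + h * x)⁻¹)
      = ∑ w ∈ Finset.univ.erase (g * h⁻¹), χ w := by
    refine Finset.sum_bij' (fun x _ => (A + g * x) * (A + h * x)⁻¹)
      (fun w _ => A * (w - 1) * (g - w * h)⁻¹) ?_ ?_ ?_ ?_ ?_
    · intro x hx
      have hD : A + h * x ≠ 0 := fun hc => (Finset.ne_of_mem_erase hx) ((hzero x).mp hc)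
      refine Finset.mem_erase.mpr ⟨?_, Finset.mem_univ _⟩
      intro hc
      rw [mul_inv_eq_iff_eq_mul₀ hD] at hc
      have : A * h = A * g := by linear_combination h * hc + g * (A + h * x) * (mul_inv_cancel₀ hh)
      exact hgh (mul_left_cancel₀ hA this.symm)
    · intro w hw
      have hw' : w ≠ g * h⁻¹ := Finset.ne_of_mem_erase hw
      have hD : g - w * h ≠ 0 := by
        intro hc
        apply hw'
        have : w * h = g := by linear_combination -hc
        field_simp [this]
        exact this
      refine Finset.mem_erase.mpr ⟨?_, Finset.mem_univ _⟩
      intro hc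
      rw [hx₀def] at hc
      rw [mul_inv_eq_iff_eq_mul₀ hD] at hc
      have : A * h = A * g := by
        linear_combination -h * hc + A * (g - w * h) * (mul_inv_cancel₀ hh)
      exact hgh (mul_left_cancel₀ hA this.symm)
    · intro x hx
      have hD : A + h * x ≠ 0 := fun hc => (Finset.ne_of_mem_erase hx) ((hzero x).mp hc)
      have h1 : (A + g * x) * (A + h * x)⁻¹ - 1 = (g - h) * x * (A + h * x)⁻¹ := by
        linear_combination (mul_inv_cancel₀ hD)
      have h2 : g - (A + g * x) * (A + h * x)⁻¹ * h = A * (g - h) * (A + h * x)⁻¹ := by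
        linear_combination (-g) * (mul_inv_cancel₀ hD)
      show A * ((A + g * x) * (A + h * x)⁻¹ - 1) * (g - (A + g * x) * (A + h * x)⁻¹ * h)⁻¹ = x
      rw [h1, h2]
      field_simp
    · intro w hw
      have hw' : w ≠ g * h⁻¹ := Finset.ne_of_mem_erase hw
      have hD : g - w * h ≠ 0 := by
        intro hc
        apply hw'
        have : w * h = g := by linear_combination -hc
        field_simp [this]
        exact this
      have h1 : A + g * (A * (w - 1) * (g - w * h)⁻¹) = A * w * (g - h) * (g - w * h)⁻¹ := by
        field_simp
        ring
      have h2 : A + h * (A * (w - 1) * (g - w * h)⁻¹) = A * (g - h) * (g - w * h)⁻¹ := by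
        linear_combination (-A) * (mul_inv_cancel₀ hD)
      show (A + g * (A * (w - 1) * (g - w * h)⁻¹)) * (A + h * (A * (w - 1) * (g - w * h)⁻¹))⁻¹ = w
      rw [h1, h2]
      field_simp
    · intro x hx
      rfl
  rw [hbij, Finset.sum_erase_eq_sub (Finset.mem_univ _),
    MulChar.sum_eq_zero_of_ne_one hχ, zero_sub]

private lemma aux_inner (χ : MulChar (ZMod p) ℂ) (hχ : χ ≠ 1) (A g h : ZMod p)
    (hA : A ≠ 0) (hg : g ≠ 0) (hh : h ≠ 0) :
    ∑ x : ZMod p, χ (A + g * x) * (starRingEnd ℂ) (χ (A + h * x))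
      = (if g = h then (p : ℂ) else 0) - χ (g * h⁻¹) := by
  by_cases hgh : g = h
  · subst hgh
    rw [if_pos rfl, aux_diag χ A g hA hg, mul_inv_cancel₀ hg, χ.map_one]
  · rw [if_neg hgh, aux_offdiag χ hχ A g h hA hg hh hgh, zero_sub]

private lemma aux_c (χ : MulChar (ZMod p) ℂ) (G : Subgroup (ZMod p)ˣ) :
    (∑ k : G, χ ((k : (ZMod p)ˣ) : ZMod p)) = 0 ∨
    (∑ k : G, χ ((k : (ZMod p)ˣ) : ZMod p)) = (Fintype.card G : ℂ) := by
  by_cases hall : ∀ k : G, χ ((k : (ZMod p)ˣ) : ZMod p) = 1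
  · right
    rw [Finset.sum_congr rfl fun k _ => hall k]
    simp
  · left
    push_neg at hall
    obtain ⟨k₀, hk₀⟩ := hall
    have h1 : ∑ k : G, χ (((k₀ * k : G) : (ZMod p)ˣ) : ZMod p)
        = ∑ k : G, χ ((k : (ZMod p)ˣ) : ZMod p) :=
      Fintype.sum_equiv (Equiv.mulLeft k₀) _ _ (fun k => rfl)
    have h2 : ∀ k : G, χ (((k₀ * k : G) : (ZMod p)ˣ) : ZMod p)
        = χ ((k₀ : (ZMod p)ˣ) : ZMod p) * χ ((k : (ZMod p)ˣ) : ZMod p) := by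
      intro k
      rw [show (((k₀ * k : G) : (ZMod p)ˣ) : ZMod p)
        = ((k₀ : (ZMod p)ˣ) : ZMod p) * ((k : (ZMod p)ˣ) : ZMod p) from rfl, map_mul]
    rw [Finset.sum_congr rfl fun k _ => h2 k, ← Finset.mul_sum] at h1
    have h3 : (χ ((k₀ : (ZMod p)ˣ) : ZMod p) - 1)
        * (∑ k : G, χ ((k : (ZMod p)ˣ) : ZMod p)) = 0 := by
      linear_combination h1
    rcases mul_eq_zero.mp h3 with h | h
    · exact absurd (by linear_combination h) hk₀
    · exact h

private lemma aux_fsum (χ : MulChar (ZMod p) ℂ) (hχ : χ ≠ 1) (G : Subgroup (ZMod p)ˣ)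
    (A : ZMod p) (hA : A ≠ 0) :
    ∑ x : ZMod p, ‖∑ g : G, χ (A + ((g : (ZMod p)ˣ) : ZMod p) * x)‖ ^ 2
      ≤ (Fintype.card G : ℝ) * p := by
  set T' : ℕ := Fintype.card G with hT'
  set c : ℂ := ∑ k : G, χ ((k : (ZMod p)ˣ) : ZMod p) with hc
  have hunit : ∀ g : G, ((g : (ZMod p)ˣ) : ZMod p) ≠ 0 := fun g => Units.ne_zero _
  have hinj : ∀ g h : G, ((g : (ZMod p)ˣ) : ZMod p) = ((h : (ZMod p)ˣ) : ZMod p) ↔ g = h := by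
    intro g h
    constructor
    · intro hgh; exact Subtype.ext (Units.ext hgh)
    · intro hgh; rw [hgh]
  have hC : ∑ x : ZMod p, (∑ g : G, χ (A + ((g : (ZMod p)ˣ) : ZMod p) * x))
        * (starRingEnd ℂ) (∑ h : G, χ (A + ((h : (ZMod p)ˣ) : ZMod p) * x))
      = (T' : ℂ) * p - (T' : ℂ) * c := by
    have e1 : ∀ x : ZMod p, (∑ g : G, χ (A + ((g : (ZMod p)ˣ) : ZMod p) * x))
          * (starRingEnd ℂ) (∑ h : G, χ (A + ((h : (ZMod p)ˣ) : ZMod p) * x))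
        = ∑ g : G, ∑ h : G, χ (A + ((g : (ZMod p)ˣ) : ZMod p) * x)
            * (starRingEnd ℂ) (χ (A + ((h : (ZMod p)ˣ) : ZMod p) * x)) := by
      intro x
      rw [map_sum, Finset.sum_mul_sum]
    rw [Finset.sum_congr rfl fun x _ => e1 x]
    rw [Finset.sum_comm]
    rw [Finset.sum_congr rfl fun g _ => Finset.sum_comm]
    have e2 : ∀ g h : G, ∑ x : ZMod p, χ (A + ((g : (ZMod p)ˣ) : ZMod p) * x)
          * (starRingEnd ℂ) (χ (A + ((h : (ZMod p)ˣ) : ZMod p) * x))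
        = (if g = h then (p : ℂ) else 0)
          - χ ((((g * h⁻¹ : G) : (ZMod p)ˣ)) : ZMod p) := by
      intro g h
      rw [aux_inner χ hχ A _ _ hA (hunit g) (hunit h)]
      congr 1
      · simp only [hinj g h]
      · congr 1
        push_cast [Units.val_inv_eq_inv_val]
        ring
    rw [Finset.sum_congr rfl fun g _ => Finset.sum_congr rfl fun h _ => e2 g h]
    have e3 : ∀ g : G, ∑ h : G, ((if g = h then (p : ℂ) else 0)
          - χ ((((g * h⁻¹ : G) : (ZMod p)ˣ)) : ZMod p))
        = (p : ℂ) - c := by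
      intro g
      rw [Finset.sum_sub_distrib, Finset.sum_ite_eq Finset.univ g (fun _ => (p : ℂ))]
      simp only [Finset.mem_univ, if_true]
      congr 1
      exact Fintype.sum_equiv ((Equiv.inv G).trans (Equiv.mulLeft g)) _ _ (fun h => rfl)
    rw [Finset.sum_congr rfl fun g _ => e3 g, Finset.sum_const, Finset.card_univ, ← hT',
      nsmul_eq_mul, mul_sub]
  have hnorm : ∀ z : ℂ, z * (starRingEnd ℂ) z = ((‖z‖ ^ 2 : ℝ) : ℂ) := by
    intro z
    rw [Complex.mul_conj, Complex.normSq_eq_norm_sq]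
  have hre : ((∑ x : ZMod p, ‖∑ g : G, χ (A + ((g : (ZMod p)ˣ) : ZMod p) * x)‖ ^ 2 : ℝ) : ℂ)
      = (T' : ℂ) * p - (T' : ℂ) * c := by
    rw [Complex.ofReal_sum]
    rw [Finset.sum_congr rfl fun x (_ : x ∈ Finset.univ) => (hnorm
      (∑ g : G, χ (A + ((g : (ZMod p)ˣ) : ZMod p) * x))).symm]
    exact hC
  rcases aux_c χ G with h0 | h0
  · rw [← hc] at h0
    rw [h0, mul_zero, sub_zero] at hre
    have : (∑ x : ZMod p, ‖∑ g : G, χ (A + ((g : (ZMod p)ˣ) : ZMod p) * x)‖ ^ 2 : ℝ)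
        = (T' : ℝ) * p := by
      have := hre
      rw [show (T' : ℂ) * p = (((T' : ℝ) * p : ℝ) : ℂ) by push_cast; ring] at this
      exact_mod_cast this
    rw [this]
  · rw [← hc, ← hT'] at h0
    rw [h0] at hre
    have heq : (∑ x : ZMod p, ‖∑ g : G, χ (A + ((g : (ZMod p)ˣ) : ZMod p) * x)‖ ^ 2 : ℝ)
        = (T' : ℝ) * p - (T' : ℝ) * T' := by
      have := hre
      rw [show (T' : ℂ) * p - (T' : ℂ) * (T' : ℂ)
        = (((T' : ℝ) * p - (T' : ℝ) * T' : ℝ) : ℂ) by push_cast; ring] at this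
      exact_mod_cast this
    rw [heq]
    nlinarith [Nat.cast_nonneg (α := ℝ) T']

end helpers

/-- For a nonprincipal multiplicative character `χ` of `𝔽_p`, a multiplicative
subgroup `G ⊆ 𝔽_p^*` of order `T`, and `a ∈ 𝔽_p^*`, one has
`|T_χ(a, G)|² ≤ p · E(G) / T`, where `T_χ(a, G) = ∑_{λ,μ ∈ G} χ(a + λ + μ)` and
`E(G)` is the additive energy of `G`. -/
theorem stmt_17 (p : ℕ) [Fact p.Prime] (χ : MulChar (ZMod p) ℂ) (hχ : χ ≠ 1)
    (T : ℕ) (G : Subgroup (ZMod p)ˣ) (hT : Nat.card G = T) (a : (ZMod p)ˣ) :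
    ‖∑ l : G, ∑ m : G,
        χ ((a : ZMod p) + ((l : (ZMod p)ˣ) : ZMod p) + ((m : (ZMod p)ˣ) : ZMod p))‖ ^ 2
      ≤ (p : ℝ) *
          (((Finset.univ : Finset ((G × G) × (G × G))).filter (fun q =>
              ((q.1.1 : (ZMod p)ˣ) : ZMod p) + ((q.1.2 : (ZMod p)ˣ) : ZMod p)
                = ((q.2.1 : (ZMod p)ˣ) : ZMod p) + ((q.2.2 : (ZMod p)ˣ) : ZMod p))).card : ℝ)
        / T := by
  classical
  have hA : (a : ZMod p) ≠ 0 := Units.ne_zero a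
  have hTcard : Fintype.card G = T := by rw [← Nat.card_eq_fintype_card, hT]
  have hTpos : 0 < T := hTcard ▸ Fintype.card_pos
  set A : ZMod p := (a : ZMod p) with hAdef
  set S : ℂ := ∑ l : G, ∑ m : G,
      χ (A + ((l : (ZMod p)ˣ) : ZMod p) + ((m : (ZMod p)ˣ) : ZMod p)) with hS
  set Ecard : ℕ := ((Finset.univ : Finset ((G × G) × (G × G))).filter (fun q =>
      ((q.1.1 : (ZMod p)ˣ) : ZMod p) + ((q.1.2 : (ZMod p)ˣ) : ZMod p)
        = ((q.2.1 : (ZMod p)ˣ) : ZMod p) + ((q.2.2 : (ZMod p)ˣ) : ZMod p))).card with hE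
  set f : ZMod p → ℂ := fun x => ∑ g : G, χ (A + ((g : (ZMod p)ˣ) : ZMod p) * x) with hf
  set r : ZMod p → ℕ := fun x => (Finset.univ.filter (fun q : G × G =>
      ((q.1 : (ZMod p)ˣ) : ZMod p) + ((q.2 : (ZMod p)ˣ) : ZMod p) = x)).card with hr
  -- Step A: G-invariance
  have stepA : ∀ g : G, (∑ l : G, ∑ m : G,
      χ (A + ((g : (ZMod p)ˣ) : ZMod p) * (((l : (ZMod p)ˣ) : ZMod p)
        + ((m : (ZMod p)ˣ) : ZMod p)))) = S := by
    intro g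
    rw [hS]
    refine Fintype.sum_equiv (Equiv.mulLeft g) _ _ (fun l => ?_)
    refine Fintype.sum_equiv (Equiv.mulLeft g) _ _ (fun m => ?_)
    congr 1
    show A + ((g : (ZMod p)ˣ) : ZMod p) * (((l : (ZMod p)ˣ) : ZMod p)
        + ((m : (ZMod p)ˣ) : ZMod p))
      = A + (((g * l : G) : (ZMod p)ˣ) : ZMod p) + (((g * m : G) : (ZMod p)ˣ) : ZMod p)
    push_cast
    ring
  -- Step B
  have stepB : (T : ℂ) * S = ∑ l : G, ∑ m : G,
      f (((l : (ZMod p)ˣ) : ZMod p) + ((m : (ZMod p)ˣ) : ZMod p)) := by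
    have h1 : ∑ g : G, (∑ l : G, ∑ m : G,
        χ (A + ((g : (ZMod p)ˣ) : ZMod p) * (((l : (ZMod p)ˣ) : ZMod p)
          + ((m : (ZMod p)ˣ) : ZMod p)))) = (T : ℂ) * S := by
      rw [Finset.sum_congr rfl fun g _ => stepA g, Finset.sum_const, Finset.card_univ,
        hTcard, nsmul_eq_mul]
    rw [← h1, Finset.sum_comm]
    refine Finset.sum_congr rfl fun l _ => ?_
    rw [Finset.sum_comm]
  -- Step C
  have stepC : ∑ q : G × G, f (((q.1 : (ZMod p)ˣ) : ZMod p) + ((q.2 : (ZMod p)ˣ) : ZMod p))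
      = ∑ x : ZMod p, (r x : ℂ) * f x := by
    rw [← Finset.sum_fiberwise_of_maps_to (g := fun q : G × G =>
      ((q.1 : (ZMod p)ˣ) : ZMod p) + ((q.2 : (ZMod p)ˣ) : ZMod p))
      (fun q _ => Finset.mem_univ _)]
    refine Finset.sum_congr rfl fun x _ => ?_
    rw [Finset.sum_congr rfl (fun q hq => by rw [(Finset.mem_filter.mp hq).2]),
      Finset.sum_const, nsmul_eq_mul, hr]
  -- Step D
  have stepD : Ecard = ∑ x : ZMod p, (r x) ^ 2 := by
    rw [hE, Finset.card_eq_sum_card_fiberwise (f := fun q : (G × G) × (G × G) =>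
      ((q.1.1 : (ZMod p)ˣ) : ZMod p) + ((q.1.2 : (ZMod p)ˣ) : ZMod p))
      (t := Finset.univ) (fun q _ => Finset.mem_univ _)]
    refine Finset.sum_congr rfl fun x _ => ?_
    rw [Finset.filter_filter]
    have hset : (Finset.univ.filter (fun q : (G × G) × (G × G) =>
          (((q.1.1 : (ZMod p)ˣ) : ZMod p) + ((q.1.2 : (ZMod p)ˣ) : ZMod p)
            = ((q.2.1 : (ZMod p)ˣ) : ZMod p) + ((q.2.2 : (ZMod p)ˣ) : ZMod p))
          ∧ ((q.1.1 : (ZMod p)ˣ) : ZMod p) + ((q.1.2 : (ZMod p)ˣ) : ZMod p) = x))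
        = (Finset.univ.filter (fun u : G × G =>
            ((u.1 : (ZMod p)ˣ) : ZMod p) + ((u.2 : (ZMod p)ˣ) : ZMod p) = x))
          ×ˢ (Finset.univ.filter (fun u : G × G =>
            ((u.1 : (ZMod p)ˣ) : ZMod p) + ((u.2 : (ZMod p)ˣ) : ZMod p) = x)) := by
      ext q
      simp only [Finset.mem_filter, Finset.mem_product, Finset.mem_univ, true_and]
      constructor
      · rintro ⟨h1, h2⟩; exact ⟨h2, h1 ▸ h2⟩
      · rintro ⟨h1, h2⟩; exact ⟨h1.trans h2.symm, h1⟩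
    rw [hset, Finset.card_product, hr, sq]
  -- assemble
  have h3 : (T : ℝ) * ‖S‖ ≤ ∑ x : ZMod p, (r x : ℝ) * ‖f x‖ := by
    have hTS : (T : ℝ) * ‖S‖ = ‖(T : ℂ) * S‖ := by
      rw [norm_mul, Complex.norm_natCast]
    have hbridge : ∑ q : G × G, f (((q.1 : (ZMod p)ˣ) : ZMod p) + ((q.2 : (ZMod p)ˣ) : ZMod p))
        = ∑ l : G, ∑ m : G, f (((l : (ZMod p)ˣ) : ZMod p) + ((m : (ZMod p)ˣ) : ZMod p)) :=
      Fintype.sum_prod_type _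
    rw [hTS, stepB, ← hbridge, stepC]
    refine le_trans (norm_sum_le _ _) (le_of_eq (Finset.sum_congr rfl fun x _ => ?_))
    rw [norm_mul, Complex.norm_natCast]
  have h4 : (∑ x : ZMod p, (r x : ℝ) * ‖f x‖) ^ 2
      ≤ (∑ x : ZMod p, ((r x : ℝ)) ^ 2) * (∑ x : ZMod p, ‖f x‖ ^ 2) :=
    Finset.sum_mul_sq_le_sq_mul_sq _ _ _
  have h5 : (∑ x : ZMod p, ((r x : ℝ)) ^ 2) = (Ecard : ℝ) := by
    rw [stepD]
    push_cast
    rfl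
  have h6 : ∑ x : ZMod p, ‖f x‖ ^ 2 ≤ (T : ℝ) * p := by
    have := aux_fsum χ hχ G A hA
    rw [hTcard] at this
    exact this
  have key : ((T : ℝ) * ‖S‖) ^ 2 ≤ (Ecard : ℝ) * ((T : ℝ) * p) := by
    calc ((T : ℝ) * ‖S‖) ^ 2 ≤ (∑ x : ZMod p, (r x : ℝ) * ‖f x‖) ^ 2 := by
          have hnn : (0:ℝ) ≤ (T : ℝ) * ‖S‖ := by positivity
          exact pow_le_pow_left₀ hnn h3 2
      _ ≤ (∑ x : ZMod p, ((r x : ℝ)) ^ 2) * (∑ x : ZMod p, ‖f x‖ ^ 2) := h4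
      _ = (Ecard : ℝ) * (∑ x : ZMod p, ‖f x‖ ^ 2) := by rw [h5]
      _ ≤ (Ecard : ℝ) * ((T : ℝ) * p) := by
          refine mul_le_mul_of_nonneg_left h6 (Nat.cast_nonneg _)
  have hTpos' : (0 : ℝ) < T := by exact_mod_cast hTpos
  rw [le_div_iff₀ hTpos']
  nlinarith [key, norm_nonneg S, Nat.cast_nonneg (α := ℝ) Ecard, hTpos']
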